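/- Every locally closed constructible subset of a spectral space, with the subspace topology, is a spectral space. -/

import Mathlib

/-- A spectral space: quasi-compact, quasi-separated, sober, and the
quasi-compact open subsets form a basis of the topology. -/
def SpectralSpaceProp (X : Type*) [TopologicalSpace X] : Prop :=
  CompactSpace X ∧ QuasiSeparatedSpace X ∧ QuasiSober X ∧ T0Space X ∧
    TopologicalSpace.IsTopologicalBasis {U : Set X | IsOpen U ∧ IsCompact U}

/-- The constructible subsets: the smallest class of subsets containing the
quasi-compact open subsets and stable under complements and finite unions
(hence also finite intersections). -/
inductive IsConstr {X : Type*} [TopologicalSpace X] : Set X → Prop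
  | qcOpen : ∀ U : Set X, IsOpen U → IsCompact U → IsConstr U
  | compl : ∀ A : Set X, IsConstr A → IsConstr Aᶜ
  | union : ∀ A B : Set X, IsConstr A → IsConstr B → IsConstr (A ∪ B)

/-- A constructible function: there is a finite partition of the space into
locally closed constructible subsets on each of which the function is constant. -/
def IsConsFun {X : Type*} [TopologicalSpace X] {B : Type*} (φ : X → B) : Prop :=
  ∃ (n : ℕ) (P : Fin n → Set X),
    (∀ i, IsLocallyClosed (P i) ∧ IsConstr (P i)) ∧
    (∀ x, ∃! i, x ∈ P i) ∧
    ∀ i, ∀ x ∈ P i, ∀ y ∈ P i, φ x = φ y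

open Set Topology TopologicalSpace

section Aux

variable {X : Type*} [TopologicalSpace X]

/-- Normal form for constructible sets: finite unions of differences of
quasi-compact open sets. -/
inductive ND : Set X → Prop
  | basic (U V : Set X) : IsOpen U → IsCompact U → IsOpen V → IsCompact V → ND (U \ V)
  | union (A B : Set X) : ND A → ND B → ND (A ∪ B)

lemma ND.inter [QuasiSeparatedSpace X] {A B : Set X} (hA : ND A) (hB : ND B) :
    ND (A ∩ B) := by
  induction hA generalizing B with
  | basic U V hU hUc hV hVc =>
    induction hB with
    | basic S T hS hSc hT hTc =>
      have h : (U \ V) ∩ (S \ T) = (U ∩ S) \ (V ∪ T) := by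
        ext x; simp only [mem_inter_iff, mem_diff, mem_union]; tauto
      rw [h]
      exact ND.basic _ _ (hU.inter hS)
        (QuasiSeparatedSpace.inter_isCompact U S hU hUc hS hSc) (hV.union hT) (hVc.union hTc)
    | union B₁ B₂ h₁ h₂ ih₁ ih₂ =>
      rw [Set.inter_union_distrib_left]; exact ih₁.union _ _ ih₂
  | union A₁ A₂ h₁ h₂ ih₁ ih₂ =>
    rw [Set.union_inter_distrib_right]; exact (ih₁ hB).union _ _ (ih₂ hB)

lemma ND.compl [CompactSpace X] [QuasiSeparatedSpace X] {A : Set X} (hA : ND A) : ND Aᶜ := by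
  induction hA with
  | basic U V hU hUc hV hVc =>
    have h : (U \ V)ᶜ = (univ \ U) ∪ (V \ ∅) := by
      ext x; simp only [mem_compl_iff, mem_diff, mem_union, mem_univ, mem_empty_iff_false]; tauto
    rw [h]
    exact (ND.basic _ _ isOpen_univ isCompact_univ hU hUc).union _ _
      (ND.basic _ _ hV hVc isOpen_empty isCompact_empty)
  | union A B hA hB ihA ihB =>
    rw [Set.compl_union]; exact ihA.inter ihB

lemma IsConstr.nd [CompactSpace X] [QuasiSeparatedSpace X] {A : Set X} (hA : IsConstr A) :
    ND A := by
  induction hA with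
  | qcOpen U hU hUc => simpa using ND.basic U ∅ hU hUc isOpen_empty isCompact_empty
  | compl A hA ih => exact ih.compl
  | union A B hA hB ihA ihB => exact ihA.union _ _ ihB

lemma ND.isCompact {A : Set X} (hA : ND A) : IsCompact A := by
  induction hA with
  | basic U V hU hUc hV hVc => exact hUc.diff hV
  | union A B hA hB ihA ihB => exact ihA.union ihB

lemma IsConstr.isCompact' [CompactSpace X] [QuasiSeparatedSpace X] {A : Set X}
    (hA : IsConstr A) : IsCompact A := hA.nd.isCompact

lemma IsConstr.inter' {A B : Set X} (hA : IsConstr A) (hB : IsConstr B) : IsConstr (A ∩ B) := by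
  have h : A ∩ B = (Aᶜ ∪ Bᶜ)ᶜ := by rw [Set.compl_union, compl_compl, compl_compl]
  rw [h]
  exact IsConstr.compl _ (IsConstr.union _ _ (IsConstr.compl _ hA) (IsConstr.compl _ hB))

lemma basis_mono {B S : Set (Set X)} (hB : IsTopologicalBasis B) (h1 : B ⊆ S)
    (h2 : ∀ s ∈ S, IsOpen s) : IsTopologicalBasis S :=
  isTopologicalBasis_of_isOpen_of_nhds h2 fun x u hx hu =>
    let ⟨v, hv, hxv, hvu⟩ := hB.exists_subset_of_mem_open hx hu
    ⟨v, h1 hv, hxv, hvu⟩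

end Aux

/-- A locally closed constructible subset of a spectral space is spectral for the
subspace topology. -/
theorem spectralSpace_of_locallyClosed_constructible
    {M : Type*} [TopologicalSpace M] (hM : SpectralSpaceProp M)
    (W : Set M) (hW : IsLocallyClosed W) (hWc : IsConstr W) :
    SpectralSpaceProp W := by
  obtain ⟨hc, hqs, hsob, ht0, hbasis⟩ := hM
  have key : ∀ A : Set M, IsConstr A → IsCompact A := fun A hA => hA.isCompact'
  have emb : Topology.IsEmbedding ((↑) : W → M) := Topology.IsEmbedding.subtypeVal
  have hWsub : ∀ s : Set W, ((↑) '' s : Set M) ⊆ W := fun s => Subtype.coe_image_subset _ _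
  -- trace of a quasi-compact open set is quasi-compact open in W
  have keyW : ∀ U : Set M, IsOpen U → IsCompact U → IsCompact (((↑) : W → M) ⁻¹' U) := by
    intro U hU hUc
    rw [emb.isCompact_iff, Subtype.image_preimage_coe]
    exact key _ (hWc.inter' (IsConstr.qcOpen U hU hUc))
  -- every compact open subset of W is the trace of a quasi-compact open subset of M
  have trace : ∀ s : Set W, IsOpen s → IsCompact s →
      ∃ U : Set M, IsOpen U ∧ IsCompact U ∧ ((↑) '' s : Set M) = U ∩ W := by
    intro s hs hsc
    obtain ⟨S, hS, rfl⟩ := isOpen_induced_iff.mp hs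
    have him : IsCompact (((↑) : W → M) '' ((↑) ⁻¹' S)) := hsc.image continuous_subtype_val
    have himS : (((↑) : W → M) '' ((↑) ⁻¹' S)) ⊆ S := Set.image_preimage_subset _ _
    -- choose basis elements
    have hchoice : ∀ x : M, x ∈ (((↑) : W → M) '' ((↑) ⁻¹' S)) →
        ∃ b : Set M, (IsOpen b ∧ IsCompact b) ∧ x ∈ b ∧ b ⊆ S := by
      intro x hx
      obtain ⟨b, hb, hxb, hbS⟩ := hbasis.exists_subset_of_mem_open (himS hx) hS
      exact ⟨b, hb, hxb, hbS⟩
    choose! b hb hxb hbS using hchoice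
    have hcover : (((↑) : W → M) '' ((↑) ⁻¹' S)) ⊆
        ⋃ x : (((↑) : W → M) '' ((↑) ⁻¹' S)), b x := by
      intro x hx; exact Set.mem_iUnion.mpr ⟨⟨x, hx⟩, hxb x hx⟩
    obtain ⟨t, ht⟩ := him.elim_finite_subcover
      (fun x : (((↑) : W → M) '' ((↑) ⁻¹' S)) => b x.1) (fun x => (hb x.1 x.2).1) hcover
    refine ⟨⋃ x ∈ t, b x.1, isOpen_biUnion fun x _ => (hb x.1 x.2).1,
      t.isCompact_biUnion fun x _ => (hb x.1 x.2).2, le_antisymm ?_ ?_⟩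
    · intro x hx
      exact ⟨ht hx, hWsub _ hx⟩
    · intro x hx
      have hxS : x ∈ S := by
        obtain ⟨_, ⟨y, rfl⟩, _, ⟨hy, rfl⟩, hxy⟩ := hx.1
        exact hbS y.1 y.2 hxy
      exact ⟨⟨x, hx.2⟩, hxS, rfl⟩
  refine ⟨?_, ?_, ?_, inferInstance, ?_⟩
  · exact isCompact_iff_compactSpace.mp (key W hWc)
  · -- quasi-separated
    constructor
    intro s t hs hsc ht htc
    obtain ⟨U, hU, hUc, hUe⟩ := trace s hs hsc
    obtain ⟨V, hV, hVc, hVe⟩ := trace t ht htc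
    rw [emb.isCompact_iff, Set.image_inter Subtype.val_injective, hUe, hVe]
    have h : (U ∩ W) ∩ (V ∩ W) = W ∩ (U ∩ V) := by
      ext x; simp only [Set.mem_inter_iff]; tauto
    rw [h]
    exact key _ (hWc.inter' (IsConstr.qcOpen _ (hU.inter hV)
      (QuasiSeparatedSpace.inter_isCompact U V hU hUc hV hVc)))
  · -- quasi-sober
    constructor
    intro s hs hsc
    obtain ⟨O, Z, hO, hZ, hWOZ⟩ := hW
    have hsi : IsIrreducible (((↑) : W → M) '' s) :=
      hs.image _ continuous_subtype_val.continuousOn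
    obtain ⟨ξ, hξ⟩ := hsob.sober hsi.closure isClosed_closure
    have hξeq : closure {ξ} = closure (((↑) : W → M) '' s) := hξ
    have hsT : ((↑) : W → M) '' s ⊆ closure (((↑) : W → M) '' s) := subset_closure
    obtain ⟨x, hxs⟩ := hs.nonempty
    have hxT : (x : M) ∈ closure {ξ} := by
      rw [hξeq]; exact hsT ⟨x, hxs, rfl⟩
    have hξZ : ξ ∈ Z := by
      have h1 : closure (((↑) : W → M) '' s) ⊆ Z := by
        apply closure_minimal _ hZ
        intro y hy
        have := hWsub s hy
        rw [hWOZ] at this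
        exact this.2
      exact h1 (hξeq ▸ subset_closure rfl)
    have hξO : ξ ∈ O := by
      by_contra hne
      have : closure {ξ} ⊆ Oᶜ :=
        closure_minimal (Set.singleton_subset_iff.mpr hne) hO.isClosed_compl
      have hx2 : (x : M) ∈ O ∩ Z := by rw [← hWOZ]; exact x.2
      exact this hxT hx2.1
    have hξW : ξ ∈ W := hWOZ ▸ ⟨hξO, hξZ⟩
    refine ⟨⟨ξ, hξW⟩, ?_⟩
    show closure {(⟨ξ, hξW⟩ : W)} = s
    have hcl : closure {(⟨ξ, hξW⟩ : W)} =
        ((↑) : W → M) ⁻¹' closure (((↑) : W → M) '' {(⟨ξ, hξW⟩ : W)}) :=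
      emb.closure_eq_preimage_closure_image _
    rw [hcl, Set.image_singleton]
    obtain ⟨C, hC, hsC⟩ := isClosed_induced_iff.mp hsc
    have hTC : closure (((↑) : W → M) '' s) ⊆ C := by
      apply closure_minimal _ hC
      rintro y ⟨z, hz, rfl⟩
      rw [← hsC] at hz
      exact hz
    apply le_antisymm
    · intro y hy
      have h2 : (y : M) ∈ closure (((↑) : W → M) '' s) := by
        rw [← hξeq]; exact hy
      rw [← hsC]
      exact hTC h2
    · intro y hy
      show (y : M) ∈ closure {ξ}
      rw [hξeq]
      exact subset_closure ⟨y, hy, rfl⟩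
  · -- basis
    have hind := hbasis.isInducing emb.isInducing
    apply basis_mono hind
    · rintro _ ⟨U, ⟨hU, hUc⟩, rfl⟩
      exact ⟨hU.preimage continuous_subtype_val, keyW U hU hUc⟩
    · exact fun u hu => hu.1
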